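/- Let E be a finite-dimensional real normed space, A : E → ℝ convex superlinear, B its Fenchel transform. Let x₀ ∈ E, let I be an index set, and for each i ∈ I let F_i be a flat of A containing x₀ such that x₀ lies in the relative interior of F_i for all i, except possibly one index i₀. Then there exists a flat F of A (namely a set of the form { x : A(x) + B(y) = ⟨y,x⟩ } for some y ∈ E*) containing F_i for all i ∈ I. -/

import Mathlib

set_option maxHeartbeats 1000000


/-- A flat of `A` : projection to `E` of the intersection of the graph of `A`
with an affine subspace meeting the graph but not the open epigraph. -/
def IsFlat {E : Type*} [NormedAddCommGroup E] [NormedSpace ℝ E]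
    (A : E → ℝ) (F : Set E) : Prop :=
  ∃ V : AffineSubspace ℝ (E × ℝ),
    (∃ p ∈ V, p.2 = A p.1) ∧
    (∀ p ∈ (V : Set (E × ℝ)), ¬ A p.1 < p.2) ∧
    F = {x : E | (x, A x) ∈ V}

private lemma flat_combo {E : Type*} [NormedAddCommGroup E] [NormedSpace ℝ E]
    {A : E → ℝ} (hconv : ConvexOn ℝ Set.univ A)
    {W : AffineSubspace ℝ (E × ℝ)} (hW : ∀ p ∈ (W : Set (E × ℝ)), ¬ A p.1 < p.2)
    {x z : E} (hx : (x, A x) ∈ W) (hz : (z, A z) ∈ W)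
    {a b : ℝ} (ha : 0 ≤ a) (hb : 0 ≤ b) (hab : a + b = 1) :
    A (a • x + b • z) = a * A x + b * A z := by
  have hq : (a • ((x, A x) : E × ℝ) + b • ((z, A z) : E × ℝ)) ∈ W :=
    W.convex hx hz ha hb hab
  have h1 : A (a • x + b • z) ≤ a * A x + b * A z := hconv.2 trivial trivial ha hb hab
  have h2 := hW _ hq
  simp only [Prod.fst_add, Prod.smul_fst, Prod.snd_add, Prod.smul_snd, smul_eq_mul] at h2
  linarith [not_lt.1 h2]

/-- A family of flats all containing `x₀`, all but at most one containing `x₀` in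
the relative interior, is contained in a common face. -/
theorem stmt_6 {E : Type*} [NormedAddCommGroup E] [NormedSpace ℝ E] [FiniteDimensional ℝ E]
    (A : E → ℝ) (hconv : ConvexOn ℝ Set.univ A)
    (hsup : ∀ C > (0:ℝ), ∃ R : ℝ, ∀ x : E, R ≤ ‖x‖ → C * ‖x‖ ≤ A x)
    (B : (E →L[ℝ] ℝ) → ℝ) (hB : ∀ y : E →L[ℝ] ℝ, B y = ⨆ x : E, (y x - A x))
    {I : Type*} (F : I → Set E) (hflat : ∀ i, IsFlat A (F i))
    (x₀ : E) (hx₀ : ∀ i, x₀ ∈ F i)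
    (hri : ∃ i₀ : I, ∀ i, i ≠ i₀ → x₀ ∈ intrinsicInterior ℝ (F i)) :
    ∃ y : E →L[ℝ] ℝ, ∀ i, F i ⊆ {x : E | A x + B y = y x} := by
  classical
  obtain ⟨i₀, hri⟩ := hri
  obtain ⟨V, ⟨p, hpV, hpA⟩, hVsupp, hFV⟩ := hflat i₀
  have hAcont : Continuous A := continuousOn_univ.1 (hconv.continuousOn isOpen_univ)
  -- the open strict epigraph
  set S : Set (E × ℝ) := {q : E × ℝ | A q.1 < q.2} with hSdef
  have hSopen : IsOpen S := isOpen_lt (hAcont.comp continuous_fst) continuous_snd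
  have hSconv : Convex ℝ S := by
    intro q hq r hr a b ha hb hab
    simp only [hSdef, Set.mem_setOf_eq, Prod.fst_add, Prod.smul_fst, Prod.snd_add,
      Prod.smul_snd, smul_eq_mul] at *
    have h1 : A (a • q.1 + b • r.1) ≤ a * A q.1 + b * A r.1 :=
      hconv.2 trivial trivial ha hb hab
    rcases ha.eq_or_lt with rfl | ha'
    · have hb1 : b = 1 := by linarith
      subst hb1
      simp only [zero_smul, one_smul, zero_mul, zero_add] at h1 ⊢
      linarith
    · have h2 : a * A q.1 < a * q.2 := mul_lt_mul_of_pos_left hq ha'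
      have h3 : b * A r.1 ≤ b * r.2 := mul_le_mul_of_nonneg_left hr.le hb
      linarith
  have hdisj : Disjoint S (V : Set (E × ℝ)) :=
    Set.disjoint_left.2 fun q hqS hqV => hVsupp q hqV hqS
  obtain ⟨f, c, hfS, hfV⟩ := geometric_hahn_banach_open hSconv hSopen V.convex hdisj
  set y₀ : E →L[ℝ] ℝ := f.comp (ContinuousLinearMap.inl ℝ E ℝ) with hy₀def
  set β : ℝ := f (0, 1) with hβdef
  have hsplit : ∀ q : E × ℝ, f q = y₀ q.1 + q.2 * β := by
    intro q
    have hq : q = ((q.1, (0:ℝ)) : E × ℝ) + q.2 • ((0:E), (1:ℝ)) := by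
      apply Prod.ext <;> simp
    calc f q = f ((q.1, (0:ℝ)) + q.2 • ((0:E), (1:ℝ))) := by rw [← hq]
    _ = f (q.1, (0:ℝ)) + q.2 * f (0, 1) := by rw [map_add, map_smul]; rfl
    _ = y₀ q.1 + q.2 * β := rfl
  have hSx : ∀ (x : E) (t : ℝ), A x < t → y₀ x + t * β < c := by
    intro x t ht
    have := hfS (x, t) ht
    rwa [hsplit] at this
  have hlb : ∀ q ∈ (V : Set (E × ℝ)), c ≤ y₀ q.1 + q.2 * β := by
    intro q hq
    have := hfV q hq
    rwa [hsplit] at this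
  -- β < 0
  have hβneg : β < 0 := by
    rcases lt_trichotomy β 0 with h | h | h
    · exact h
    · exfalso
      have hx0 : ∀ x : E, y₀ x < c := by
        intro x
        have := hSx x (A x + 1) (by linarith)
        rw [h] at this; simpa using this
      have hy0 : ∀ x : E, y₀ x ≤ 0 := by
        intro x
        by_contra hx
        push_neg at hx
        have hs : (0:ℝ) < (|c| + 1) / y₀ x := by positivity
        have h2 := hx0 (((|c| + 1) / y₀ x) • x)
        rw [map_smul] at h2
        simp only [smul_eq_mul] at h2
        rw [div_mul_cancel₀ _ hx.ne'] at h2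
        linarith [le_abs_self c]
      have h1 : (0:ℝ) < c := by
        have := hSx 0 (A 0 + 1) (by linarith)
        rw [h] at this; simpa using this
      have h2 := hlb p hpV
      rw [h, mul_zero, add_zero] at h2
      have h3 := hy0 p.1
      linarith
    · exfalso
      set t := max (A 0 + 1) ((|c| + 1) / β) with htdef
      have ht : A 0 < t := lt_of_lt_of_le (by linarith) (le_max_left _ _)
      have h1 := hSx 0 t ht
      rw [map_zero, zero_add] at h1
      have h2 : |c| + 1 ≤ t * β := by
        rw [← div_mul_cancel₀ (|c| + 1) h.ne']
        exact mul_le_mul_of_nonneg_right (le_max_right _ _) h.le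
      linarith [le_abs_self c]
  -- upper bound everywhere
  have hub : ∀ x : E, y₀ x + A x * β ≤ c := by
    intro x
    by_contra hcon
    push_neg at hcon
    set d := y₀ x + A x * β - c with hddef
    have hdpos : 0 < d := by linarith
    set ε := d / (-(2 * β)) with hεdef
    have hεpos : 0 < ε := by
      apply div_pos hdpos; linarith
    have hβ0 : β ≠ 0 := hβneg.ne
    have hεβ : ε * β = -(d / 2) := by
      rw [hεdef]; field_simp
    have h1 := hSx x (A x + ε) (by linarith)
    rw [show (A x + ε) * β = A x * β + ε * β from by ring] at h1
    linarith
  -- the separating functional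
  refine ⟨(-β)⁻¹ • y₀, ?_⟩
  set y : E →L[ℝ] ℝ := (-β)⁻¹ • y₀ with hydef
  set k := c / (-β) with hkdef
  have hβpos : 0 < -β := by linarith
  have hβ0 : β ≠ 0 := hβneg.ne
  have hyx : ∀ x : E, y x - A x = (y₀ x + A x * β) / (-β) := by
    intro x
    rw [hydef]
    simp only [ContinuousLinearMap.smul_apply, smul_eq_mul]
    field_simp [hβ0]
    ring
  have yineq : ∀ x : E, y x - A x ≤ k := by
    intro x
    rw [hyx, hkdef]
    exact div_le_div_of_nonneg_right (hub x) hβpos.le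
  have eqF : ∀ x ∈ F i₀, y x - A x = k := by
    intro x hx
    have hmem : (x, A x) ∈ V := by rw [hFV] at hx; exact hx
    have h1 := hlb (x, A x) hmem
    have h2 := hub x
    rw [hyx, hkdef]
    have : y₀ x + A x * β = c := le_antisymm h2 h1
    rw [this]
  have hBy : B y = k := by
    rw [hB]
    apply le_antisymm
    · exact ciSup_le fun x => yineq x
    · have hbdd : BddAbove (Set.range fun x : E => y x - A x) := by
        refine ⟨k, ?_⟩
        rintro r ⟨x, rfl⟩
        exact yineq x
      calc k = y x₀ - A x₀ := (eqF x₀ (hx₀ i₀)).symm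
      _ ≤ ⨆ x : E, (y x - A x) := le_ciSup hbdd x₀
  intro i x hxFi
  by_cases hi : i = i₀
  · subst hi
    have := eqF x hxFi
    simp only [Set.mem_setOf_eq]
    linarith [hBy ▸ this]
  · -- x₀ in the relative interior of F i
    obtain ⟨W, _, hWsupp, hFW⟩ := hflat i
    obtain ⟨x₀', hx₀'int, hx₀'⟩ := hri i hi
    have hxspan : x ∈ affineSpan ℝ (F i) := subset_affineSpan ℝ _ hxFi
    have hx₀span : x₀ ∈ affineSpan ℝ (F i) := subset_affineSpan ℝ _ (hx₀ i)
    set γ : ℝ → affineSpan ℝ (F i) := fun t =>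
      ⟨AffineMap.lineMap x x₀ (1 + t), AffineMap.lineMap_mem _ hxspan hx₀span⟩ with hγdef
    have hγcont : Continuous γ := by
      apply Continuous.subtype_mk
      simp only [AffineMap.lineMap_apply, vsub_eq_sub, vadd_eq_add]
      exact ((continuous_const.add continuous_id).smul continuous_const).add continuous_const
    have hγ0 : γ 0 = x₀' := by
      apply Subtype.ext
      simp only [hγdef, add_zero, AffineMap.lineMap_apply_one, hx₀']
    have hnhds : γ ⁻¹' (interior ((↑) ⁻¹' (F i) : Set (affineSpan ℝ (F i)))) ∈ nhds (0:ℝ) :=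
      (isOpen_interior.preimage hγcont).mem_nhds (by rw [Set.mem_preimage, hγ0]; exact hx₀'int)
    obtain ⟨δ, hδpos, hδ⟩ := Metric.mem_nhds_iff.1 hnhds
    set ε := δ / 2 with hεdef
    have hεpos : 0 < ε := by positivity
    have hεmem : γ ε ∈ interior ((↑) ⁻¹' (F i) : Set (affineSpan ℝ (F i))) := by
      apply hδ
      simp only [Metric.mem_ball, Real.dist_eq, sub_zero, hεdef]
      rw [abs_of_pos (by positivity)]
      linarith
    have hz'' : γ ε ∈ (Subtype.val ⁻¹' F i : Set (affineSpan ℝ (F i))) :=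
      interior_subset hεmem
    have hz : AffineMap.lineMap x x₀ (1 + ε) ∈ F i := hz''
    set z := AffineMap.lineMap x x₀ (1 + ε) with hzdef
    have h1ε : (1:ℝ) + ε ≠ 0 := by positivity
    set a := 1 / (1 + ε) with hadef
    set b := ε / (1 + ε) with hbdef
    have ha' : 0 < a := by positivity
    have hb' : 0 < b := by positivity
    have hab : a + b = 1 := by rw [hadef, hbdef]; field_simp
    have hcombo : a • z + b • x = x₀ := by
      rw [hzdef]
      simp only [AffineMap.lineMap_apply, vsub_eq_sub, vadd_eq_add]
      rw [smul_add, smul_smul]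
      have h2 : a * (1 + ε) = 1 := by rw [hadef]; field_simp
      rw [h2, one_smul]
      have h3 : a • x + b • x = x := by
        rw [← add_smul, hab, one_smul]
      rw [add_assoc, h3]
      abel
    have hmemz : (z, A z) ∈ W := by rw [hFW] at hz; exact hz
    have hmemx : (x, A x) ∈ W := by rw [hFW] at hxFi; exact hxFi
    have hAeq : A x₀ = a * A z + b * A x := by
      have := flat_combo hconv hWsupp hmemz hmemx ha'.le hb'.le hab
      rw [hcombo] at this
      exact this
    have hyeq : y x₀ = a * y z + b * y x := by
      rw [← hcombo, map_add, map_smul, map_smul]; rfl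
    have hgz : y z - A z ≤ k := yineq z
    have hgx : y x - A x ≤ k := yineq x
    have hgx₀ : y x₀ - A x₀ = k := eqF x₀ (hx₀ i₀)
    have hkey : a * (y z - A z) + b * (y x - A x) = k := by
      rw [← hgx₀, hyeq, hAeq]; ring
    have h5 : a * (y z - A z) ≤ a * k := mul_le_mul_of_nonneg_left hgz ha'.le
    have h7 : a * k + b * k = k := by rw [← add_mul, hab, one_mul]
    have h6 : b * k ≤ b * (y x - A x) := by linarith
    have hgxk : k ≤ y x - A x := le_of_mul_le_mul_left h6 hb'
    simp only [Set.mem_setOf_eq]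
    rw [hBy]
    linarith
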